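/- arXiv:1108.3685 — 2 statements merged into one kernel-verified Lean document; each statement's English description precedes it below -/
import Mathlib

section
/- Let c ≥ 0 and let a_1,...,a_n ∈ {0,1,...,p-1} be not all zero. For each i with a_i ≠ 0 let k(i) ≥ 0 be a natural number such that c = k(i) + n - i - 1 when i < n and c = k(n) + n - 1 when i = n. Set m(i) = a_i p^{k(i)} (and m(i) = 0 when a_i = 0), d = ∏_{i=1}^{n} d_{n,i}^{m(i)}, and j = max({n - i : 1 ≤ i < n, a_i ≠ 0} ∪ {n : if a_n ≠ 0}). Then P(c,t)(d) = 0 for every t with j < t ≤ c + 1. -/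
open MvPolynomial Matrix

/-- The algebra automorphism of `F_p[y_1,...,y_n]` induced by `g ∈ GL_n(F_p)`
(linear substitution of the variables: `y_i ↦ ∑_j g_{j i} y_j`). -/
noncomputable def glAct (p n : ℕ) (g : GL (Fin n) (ZMod p)) :
    MvPolynomial (Fin n) (ZMod p) →ₐ[ZMod p] MvPolynomial (Fin n) (ZMod p) :=
  aeval fun i => ∑ j, C ((g : Matrix (Fin n) (Fin n) (ZMod p)) j i) * X j

/-- The total Steenrod operation `P_t`, the algebra homomorphism with
`P_t(y_i) = y_i + y_i^p t`. -/
noncomputable def Pt (p n : ℕ) :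
    MvPolynomial (Fin n) (ZMod p) →ₐ[ZMod p] Polynomial (MvPolynomial (Fin n) (ZMod p)) :=
  aeval fun i => Polynomial.C (X i) + Polynomial.C (X i ^ p) * Polynomial.X

/-- The Steenrod operation `P^k`: the coefficient of `t^k` in `P_t(f)`. -/
noncomputable def steenrod (p n k : ℕ) (f : MvPolynomial (Fin n) (ZMod p)) :
    MvPolynomial (Fin n) (ZMod p) :=
  (Pt p n f).coeff k

/-- The Dickson invariant `d_{n,i}`, defined from the identity
`∏_{v ∈ F_p^n} (X + v·y) = ∑_{i=0}^n (-1)^i d_{n,i} X^{p^{n-i}}`. -/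
noncomputable def dickson (p n i : ℕ) [NeZero p] : MvPolynomial (Fin n) (ZMod p) :=
  (-1) ^ i *
    (∏ v : Fin n → ZMod p,
      (Polynomial.X + Polynomial.C (∑ j, C (v j) * X j))).coeff (p ^ (n - i))

/-- The iterated Steenrod operation `P(c,j) = P^{p^{c-j+1}} ∘ ⋯ ∘ P^{p^{c-1}} ∘ P^{p^c}`
(`P^{p^c}` applied first). -/
noncomputable def Pcj (p n c : ℕ) : ℕ → MvPolynomial (Fin n) (ZMod p) → MvPolynomial (Fin n) (ZMod p)
  | 0 => id
  | j + 1 => fun f => steenrod p n (p ^ (c + 1 - (j + 1))) (Pcj p n c j f)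

/-- Apply the composite `P^{p^{s_1}} ∘ P^{p^{s_2}} ∘ ⋯ ∘ P^{p^{s_r}}` (last entry applied first). -/
noncomputable def steenrodList (p n : ℕ) :
    List ℕ → MvPolynomial (Fin n) (ZMod p) → MvPolynomial (Fin n) (ZMod p)
  | [] => id
  | s :: rest => fun f => steenrod p n (p ^ s) (steenrodList p n rest f)

lemma steenrod_zero' (p n r : ℕ) : steenrod p n r 0 = 0 := by
  simp [steenrod]

lemma steenrod_pow_char (p n : ℕ) [Fact p.Prime] (r : ℕ) (g : MvPolynomial (Fin n) (ZMod p)) :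
    steenrod p n r (g ^ p) = if p ∣ r then (steenrod p n (r / p) g) ^ p else 0 := by
  have h := Polynomial.map_frobenius_expand p (Pt p n g)
  unfold steenrod
  rw [map_pow, ← h, Polynomial.coeff_map,
    Polynomial.coeff_expand (Fact.out (p := p.Prime)).pos]
  split_ifs with hd
  · rw [frobenius_def]
  · simp

lemma steenrod_pow_not_dvd (p n : ℕ) [Fact p.Prime] (M : ℕ) :
    ∀ (r : ℕ) (g : MvPolynomial (Fin n) (ZMod p)), ¬ p ^ M ∣ r → steenrod p n r (g ^ p ^ M) = 0 := by
  induction M with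
  | zero => intro r g h; exact absurd (one_dvd r) (by simp at h)
  | succ M ih =>
    intro r g h
    rw [pow_succ, pow_mul, steenrod_pow_char]
    split_ifs with hd
    · rw [ih (r / p) g (fun hdd => h ?_)]
      · exact zero_pow (Fact.out (p := p.Prime)).ne_zero
      · obtain ⟨s, hs⟩ := hdd
        obtain ⟨u, hu⟩ := hd
        refine ⟨s, ?_⟩
        rw [hu, Nat.mul_div_cancel_left u (Fact.out (p := p.Prime)).pos] at hs
        rw [hu, hs, pow_succ]
        ring
    · rfl

lemma steenrod_pow_dvd (p n : ℕ) [Fact p.Prime] (M : ℕ) :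
    ∀ (s : ℕ) (g : MvPolynomial (Fin n) (ZMod p)), M ≤ s →
      steenrod p n (p ^ s) (g ^ p ^ M) = (steenrod p n (p ^ (s - M)) g) ^ p ^ M := by
  induction M with
  | zero => intro s g _; simp
  | succ M ih =>
    intro s g hMs
    have h1 : g ^ p ^ (M + 1) = (g ^ p) ^ p ^ M := by
      rw [← pow_mul, ← pow_succ']
    rw [h1, ih s (g ^ p) (by omega)]
    have h2 : p ^ (s - M) = p * p ^ (s - M - 1) := by
      rw [← pow_succ']
      congr 1
      omega
    rw [h2, steenrod_pow_char, if_pos ⟨p ^ (s - M - 1), rfl⟩,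
      Nat.mul_div_cancel_left _ (Fact.out (p := p.Prime)).pos, ← pow_mul, ← pow_succ',
      Nat.sub_sub]

/-- With `d = ∏ d_{n,i}^{m(i)}`, `m(i) = a_i p^{k(i)}` and `j` as in Lemma
`SteenActionLemma3`, one has `P(c,t)(d) = 0` for all `t` with `j < t ≤ c + 1`. -/
theorem Pcj_monomial_vanish (p n : ℕ) [Fact p.Prime] (c : ℕ) (a k : ℕ → ℕ)
    (ha_lt : ∀ i, 1 ≤ i → i ≤ n → a i < p)
    (ha_ne : ∃ i, 1 ≤ i ∧ i ≤ n ∧ a i ≠ 0)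
    (hk : ∀ i, 1 ≤ i → i ≤ n → a i ≠ 0 →
      (i < n → c + i + 1 = k i + n) ∧ (i = n → c + 1 = k i + n))
    (m : ℕ → ℕ) (hm : ∀ i, m i = a i * p ^ k i)
    (j : ℕ)
    (hjmem : j ∈ ((Finset.Icc 1 n).filter fun i => a i ≠ 0).image
      fun i => if i = n then n else n - i)
    (hjmax : ∀ x ∈ ((Finset.Icc 1 n).filter fun i => a i ≠ 0).image
      fun i => if i = n then n else n - i, x ≤ j) :
    ∀ t, j < t → t ≤ c + 1 →
      Pcj p n c t (∏ i ∈ Finset.Icc 1 n, dickson p n i ^ m i) = 0 := by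
  intro t ht htc
  have hp1 : 1 < p := (Fact.out (p := p.Prime)).one_lt
  have hjc : j ≤ c := by omega
  set M := c + 1 - j with hM
  have hdvd : ∀ i ∈ Finset.Icc 1 n, p ^ M ∣ m i := by
    intro i hi
    rcases Nat.eq_zero_or_pos (a i) with h0 | h0
    · simp [hm, h0]
    · obtain ⟨hi1, hi2⟩ := Finset.mem_Icc.mp hi
      have hane : a i ≠ 0 := h0.ne'
      have hmem : (if i = n then n else n - i) ∈
          ((Finset.Icc 1 n).filter fun i => a i ≠ 0).image
            fun i => if i = n then n else n - i :=
        Finset.mem_image_of_mem _ (Finset.mem_filter.mpr ⟨Finset.mem_Icc.mpr ⟨hi1, hi2⟩, hane⟩)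
      have hle := hjmax _ hmem
      have hk' := hk i hi1 hi2 hane
      have hMk : M ≤ k i := by
        by_cases hin : i = n
        · have h2 := hk'.2 hin
          rw [if_pos hin] at hle
          omega
        · have hlt : i < n := lt_of_le_of_ne hi2 hin
          have h1 := hk'.1 hlt
          rw [if_neg hin] at hle
          omega
      rw [hm]
      exact Dvd.dvd.mul_left (pow_dvd_pow p hMk) _
  obtain ⟨e, he⟩ : ∃ e, (∏ i ∈ Finset.Icc 1 n, dickson p n i ^ m i) = e ^ p ^ M := by
    refine ⟨∏ i ∈ Finset.Icc 1 n, dickson p n i ^ (m i / p ^ M), ?_⟩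
    rw [← Finset.prod_pow]
    refine Finset.prod_congr rfl fun i hi => ?_
    rw [← pow_mul, Nat.div_mul_cancel (hdvd i hi)]
  rw [he]
  have key : ∀ r, r ≤ j → ∃ h, Pcj p n c r (e ^ p ^ M) = h ^ p ^ M := by
    intro r hr
    induction r with
    | zero => exact ⟨e, rfl⟩
    | succ r ih =>
      obtain ⟨h, hh⟩ := ih (by omega)
      refine ⟨steenrod p n (p ^ (c + 1 - (r + 1) - M)) h, ?_⟩
      show steenrod p n (p ^ (c + 1 - (r + 1))) (Pcj p n c r (e ^ p ^ M)) = _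
      rw [hh]
      exact steenrod_pow_dvd p n M _ h (by omega)
  have hz1 : Pcj p n c (j + 1) (e ^ p ^ M) = 0 := by
    obtain ⟨h, hh⟩ := key j le_rfl
    show steenrod p n (p ^ (c + 1 - (j + 1))) (Pcj p n c j (e ^ p ^ M)) = 0
    rw [hh]
    apply steenrod_pow_not_dvd
    intro hdv
    have hle := Nat.le_of_dvd (pow_pos (by omega) _) hdv
    have hlt : p ^ (c + 1 - (j + 1)) < p ^ M :=
      Nat.pow_lt_pow_right hp1 (by omega)
    omega
  have hall : ∀ s, Pcj p n c (j + 1 + s) (e ^ p ^ M) = 0 := by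
    intro s
    induction s with
    | zero => exact hz1
    | succ s ih =>
      show steenrod p n (p ^ (c + 1 - (j + 1 + s + 1))) (Pcj p n c (j + 1 + s) (e ^ p ^ M)) = 0
      rw [ih, steenrod_zero']
  obtain ⟨s, rfl⟩ : ∃ s, t = j + 1 + s := ⟨t - (j + 1), by omega⟩
  exact hall s
end

section
/- Let p be an odd prime and let L_n = det( (y_j^{p^{i-1}})_{1 ≤ i,j ≤ n} ) ∈ F_p[y_1,...,y_n] be the Moore determinant. Then P^{p^k}(L_n^{p-2}) = 0 for every k with 0 ≤ k ≤ n - 2. -/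
open MvPolynomial Matrix
open Finset

lemma Pt_entry (p n : ℕ) [Fact p.Prime] (i j : Fin n) :
    Pt p n (X j ^ p ^ (i : ℕ)) =
      Polynomial.C (X j ^ p ^ ((i : ℕ) + 1)) * Polynomial.X ^ p ^ (i : ℕ) +
        Polynomial.C (X j ^ p ^ (i : ℕ)) := by
  have h1 : Pt p n (X j) = Polynomial.C (X j) + Polynomial.C (X j ^ p) * Polynomial.X := by
    simp [Pt]
  rw [map_pow, h1, add_pow_char_pow, add_comm]
  rw [mul_pow, ← Polynomial.C_pow, ← Polynomial.C_pow, ← pow_mul, pow_succ']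

lemma coeff_prod_sigma (p n : ℕ) [Fact p.Prime] (m : ℕ) (σ : Equiv.Perm (Fin n)) :
    (∏ r : Fin n, (Polynomial.C ((X (σ.symm r) : MvPolynomial (Fin n) (ZMod p)) ^ p ^ ((r : ℕ) + 1)) * Polynomial.X ^ p ^ (r : ℕ) +
        Polynomial.C (X (σ.symm r) ^ p ^ (r : ℕ)))).coeff m
    = ∑ T ∈ univ.powerset.filter (fun T : Finset (Fin n) => ∑ r ∈ T, p ^ (r : ℕ) = m),
        (∏ r ∈ T, (X (σ.symm r) : MvPolynomial (Fin n) (ZMod p)) ^ p ^ ((r : ℕ) + 1)) *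
          ∏ r ∈ univ \ T, X (σ.symm r) ^ p ^ (r : ℕ) := by
  rw [Finset.prod_add, Polynomial.finset_sum_coeff]
  rw [Finset.sum_filter]
  apply Finset.sum_congr rfl
  intro T _
  have : (∏ r ∈ T, Polynomial.C ((X (σ.symm r) : MvPolynomial (Fin n) (ZMod p)) ^ p ^ ((r : ℕ) + 1)) * Polynomial.X ^ p ^ (r : ℕ)) *
      ∏ r ∈ univ \ T, Polynomial.C (X (σ.symm r) ^ p ^ (r : ℕ))
      = Polynomial.C ((∏ r ∈ T, (X (σ.symm r) : MvPolynomial (Fin n) (ZMod p)) ^ p ^ ((r : ℕ) + 1)) *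
          ∏ r ∈ univ \ T, X (σ.symm r) ^ p ^ (r : ℕ)) * Polynomial.X ^ (∑ r ∈ T, p ^ (r : ℕ)) := by
    rw [Finset.prod_mul_distrib, Finset.prod_pow_eq_pow_sum, ← map_prod, ← map_prod, Polynomial.C_mul]
    ring
  rw [this, Polynomial.coeff_C_mul, Polynomial.coeff_X_pow]
  by_cases h : ∑ r ∈ T, p ^ (r : ℕ) = m
  · simp [h]
  · simp [h, Ne.symm h]

/-- The matrix `N_T` with rows `X j ^ p^{i+1}` for `i ∈ T` and `X j ^ p^i` otherwise. -/
noncomputable def NT (p n : ℕ) (T : Finset (Fin n)) :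
    Matrix (Fin n) (Fin n) (MvPolynomial (Fin n) (ZMod p)) :=
  Matrix.of fun i j => X j ^ (if i ∈ T then p ^ ((i : ℕ) + 1) else p ^ (i : ℕ))

lemma NT_det_zero (p n : ℕ) [Fact p.Prime] (m : ℕ) (h0 : 0 < m) (h1 : m < p ^ (n - 1))
    (T : Finset (Fin n)) (hT : ∑ r ∈ T, p ^ (r : ℕ) = m) : (NT p n T).det = 0 := by
  have hp : 1 < p := (Fact.out : p.Prime).one_lt
  have hne : T.Nonempty := by
    by_contra h
    rw [Finset.not_nonempty_iff_eq_empty] at h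
    subst h; simp at hT; omega
  set r0 := T.max' hne with hr0
  have hr0T : r0 ∈ T := T.max'_mem hne
  have hlt : (r0 : ℕ) + 1 < n := by
    have hle : p ^ (r0 : ℕ) ≤ m := hT ▸ Finset.single_le_sum (f := fun r : Fin n => p ^ (r : ℕ))
      (fun _ _ => Nat.zero_le _) hr0T
    have : p ^ (r0 : ℕ) < p ^ (n - 1) := lt_of_le_of_lt hle h1
    have := (Nat.pow_lt_pow_iff_right hp).mp this
    omega
  set r1 : Fin n := ⟨(r0 : ℕ) + 1, hlt⟩ with hr1
  have hr1T : r1 ∉ T := by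
    intro h
    have := T.le_max' r1 h
    rw [← hr0] at this
    have : (r1 : ℕ) ≤ (r0 : ℕ) := this
    simp [hr1] at this
  have hne' : r0 ≠ r1 := by
    intro h
    apply hr1T; rw [← h]; exact hr0T
  apply Matrix.det_zero_of_row_eq hne'
  funext j
  simp [NT, hr0T, hr1T, hr1]
  intro h; exact absurd h hr1T

lemma pow_ite_eq (p n : ℕ) (T : Finset (Fin n)) (σ : Equiv.Perm (Fin n)) :
    (∏ r ∈ T, (X (σ.symm r) : MvPolynomial (Fin n) (ZMod p)) ^ p ^ ((r : ℕ) + 1)) *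
        ∏ r ∈ Finset.univ \ T, X (σ.symm r) ^ p ^ (r : ℕ)
      = ∏ r, (X (σ.symm r) : MvPolynomial (Fin n) (ZMod p)) ^
          (if r ∈ T then p ^ ((r : ℕ) + 1) else p ^ (r : ℕ)) := by
  simp only [pow_ite, Finset.prod_ite, Finset.filter_mem_eq_inter, Finset.univ_inter,
    Finset.filter_not, Finset.filter_mem_eq_inter]

lemma coeff_Pt_det (p n : ℕ) [Fact p.Prime] (m : ℕ) (h0 : 0 < m) (h1 : m < p ^ (n - 1)) :
    (Pt p n (Matrix.det (Matrix.of fun i j : Fin n =>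
      (X j : MvPolynomial (Fin n) (ZMod p)) ^ p ^ (i : ℕ)))).coeff m = 0 := by
  rw [AlgHom.map_det]
  have hmap : (Pt p n).mapMatrix (Matrix.of fun i j : Fin n =>
      (X j : MvPolynomial (Fin n) (ZMod p)) ^ p ^ (i : ℕ))
      = Matrix.of fun i j : Fin n => Polynomial.C ((X j : MvPolynomial (Fin n) (ZMod p)) ^ p ^ ((i : ℕ) + 1)) * Polynomial.X ^ p ^ (i : ℕ) +
          Polynomial.C (X j ^ p ^ (i : ℕ)) := by
    refine Matrix.ext fun i j => ?_
    simp only [AlgHom.mapMatrix_apply, Matrix.map_apply, Matrix.of_apply]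
    exact Pt_entry p n i j
  rw [hmap, Matrix.det_apply', Polynomial.finset_sum_coeff]
  have reindex : ∀ {α : Type} [CommRing α] (σ : Equiv.Perm (Fin n)) (F : Fin n → Fin n → α),
      (∏ i, F (σ i) i) = ∏ r, F r (σ.symm r) := by
    intro α _ σ F
    rw [← Equiv.prod_comp σ (fun r => F r (σ.symm r))]
    simp
  have step : ∀ σ : Equiv.Perm (Fin n),
      (((Equiv.Perm.sign σ : ℤ) : Polynomial (MvPolynomial (Fin n) (ZMod p))) *
        ∏ i, (Matrix.of fun i j : Fin n =>
          Polynomial.C ((X j : MvPolynomial (Fin n) (ZMod p)) ^ p ^ ((i : ℕ) + 1)) * Polynomial.X ^ p ^ (i : ℕ) +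
            Polynomial.C (X j ^ p ^ (i : ℕ))) (σ i) i).coeff m
      = ∑ T ∈ univ.powerset.filter (fun T : Finset (Fin n) => ∑ r ∈ T, p ^ (r : ℕ) = m),
          (Equiv.Perm.sign σ : ℤ) •
            ((∏ r ∈ T, (X (σ.symm r) : MvPolynomial (Fin n) (ZMod p)) ^ p ^ ((r : ℕ) + 1)) *
              ∏ r ∈ univ \ T, X (σ.symm r) ^ p ^ (r : ℕ)) := by
    intro σ
    rw [← zsmul_eq_mul, Polynomial.coeff_smul, reindex σ (fun i j => (Matrix.of fun i j : Fin n => Polynomial.C ((X j : MvPolynomial (Fin n) (ZMod p)) ^ p ^ ((i : ℕ) + 1)) * Polynomial.X ^ p ^ (i : ℕ) + Polynomial.C (X j ^ p ^ (i : ℕ))) i j)]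
    simp only [Matrix.of_apply]
    rw [coeff_prod_sigma p n m σ, Finset.smul_sum]
  rw [Finset.sum_congr rfl (fun σ _ => step σ), Finset.sum_comm]
  apply Finset.sum_eq_zero
  intro T hT
  rw [Finset.mem_filter] at hT
  have hdet : ∑ σ : Equiv.Perm (Fin n), (Equiv.Perm.sign σ : ℤ) •
      ((∏ r ∈ T, (X (σ.symm r) : MvPolynomial (Fin n) (ZMod p)) ^ p ^ ((r : ℕ) + 1)) *
        ∏ r ∈ univ \ T, X (σ.symm r) ^ p ^ (r : ℕ)) = (NT p n T).det := by
    rw [Matrix.det_apply']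
    apply Finset.sum_congr rfl
    intro σ _
    rw [zsmul_eq_mul, reindex σ (fun i j => NT p n T i j)]
    congr 1
    simp only [NT, Matrix.of_apply]
    rw [pow_ite_eq p n T σ]
  rw [hdet, NT_det_zero p n m h0 h1 T hT.2]


lemma coeff_pow_eq_zero {R : Type*} [CommRing R] (q : Polynomial R) (M : ℕ)
    (h : ∀ m, 0 < m → m < M → q.coeff m = 0) (r : ℕ) :
    ∀ m, 0 < m → m < M → (q ^ r).coeff m = 0 := by
  induction r with
  | zero =>
    intro m hm _
    simp only [pow_zero, Polynomial.coeff_one]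
    simp [hm.ne']
  | succ r ih =>
    intro m hm hM
    rw [pow_succ, Polynomial.coeff_mul]
    apply Finset.sum_eq_zero
    rintro ⟨a, b⟩ hab
    rw [Finset.HasAntidiagonal.mem_antidiagonal] at hab
    rcases Nat.eq_zero_or_pos a with ha | ha
    · subst ha
      simp only [Nat.zero_add] at hab
      subst hab
      rw [h b hm hM, mul_zero]
    · rw [ih a ha (lt_of_le_of_lt (by omega) hM), zero_mul]

/-- For `p` odd and `L_n = det((y_j^{p^{i-1}})_{1 ≤ i,j ≤ n})` the Moore determinant,
`P^{p^k}(L_n^{p-2}) = 0` for all `0 ≤ k ≤ n - 2`. -/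
theorem steenrod_moore_det_vanish (p n : ℕ) [Fact p.Prime] (hp : Odd p)
    (k : ℕ) (hk : k + 2 ≤ n) :
    steenrod p n (p ^ k)
      ((Matrix.det (Matrix.of fun i j : Fin n => (X j : MvPolynomial (Fin n) (ZMod p)) ^ p ^ (i : ℕ))) ^ (p - 2)) = 0 := by
  have hp2 : 1 < p := (Fact.out : p.Prime).one_lt
  show (Pt p n _).coeff (p ^ k) = 0
  rw [map_pow]
  exact coeff_pow_eq_zero _ (p ^ (n - 1)) (coeff_Pt_det p n) (p - 2) (p ^ k)
    (Nat.pow_pos (by omega)) (Nat.pow_lt_pow_right hp2 (by omega))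
end
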